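/- Let C be a binary constant-weight code with parameters (S, N, W, K) with 0 ≤ K < W ≤ S, let ℓ ≥ 1 be an integer, and set A = Σ_{u=1}^{ℓ} ( C(W,u)² · C_{ℓ,u} / C(S,u) ), where C_{ℓ,u} = Σ_{k=0}^{u} (−1)^k C(u,k) (u−k)^ℓ. If A > K^ℓ, then N ≤ (W^ℓ − K^ℓ) / (A − K^ℓ). -/

import Mathlib

open Finset Function

/-- Hamming weight of a binary vector. -/
def cwWeight {σ : Type*} [Fintype σ] (a : σ → Bool) : ℕ :=
  (Finset.univ.filter (fun s => a s = true)).card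

/-- Overlap (number of common 1-coordinates) of two binary vectors. -/
def cwOverlap {σ : Type*} [Fintype σ] (a b : σ → Bool) : ℕ :=
  (Finset.univ.filter (fun s => a s = true ∧ b s = true)).card

/-- A binary constant-weight code with weight `W` and maximum pairwise overlap `K`:
the codewords are distinct, each has Hamming weight `W`, and every pair of distinct
codewords has overlap at most `K`. -/
def IsCWC {ι σ : Type*} [Fintype σ] (W K : ℕ) (x : ι → σ → Bool) : Prop :=
  Function.Injective x ∧ (∀ j, cwWeight (x j) = W) ∧
    ∀ j j', j ≠ j' → cwOverlap (x j) (x j') ≤ K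

section Aux
set_option linter.unusedSectionVars false
variable {β : Type*} [Fintype β] [DecidableEq β]

/-- Number of functions `Fin ℓ → β` with image exactly `V`. -/
def cwNV (ℓ : ℕ) (V : Finset β) : ℕ :=
  #(Finset.univ.filter fun t : Fin ℓ → β => Finset.image t Finset.univ = V)

lemma cw_sum_NV (ℓ : ℕ) (Wf : Finset β) :
    ∑ V ∈ Wf.powerset, cwNV ℓ V = Wf.card ^ ℓ := by
  classical
  have h1 : (Finset.univ.filter fun t : Fin ℓ → β => Finset.image t Finset.univ ⊆ Wf)
      = Fintype.piFinset (fun _ : Fin ℓ => Wf) := by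
    ext t
    simp [Fintype.mem_piFinset, Finset.image_subset_iff]
  have h2 : #(Finset.univ.filter fun t : Fin ℓ → β => Finset.image t Finset.univ ⊆ Wf)
      = Wf.card ^ ℓ := by
    rw [h1, Fintype.card_piFinset]
    simp
  have h3 : ∀ V ∈ Wf.powerset, cwNV ℓ V =
      #((Finset.univ.filter fun t : Fin ℓ → β => Finset.image t Finset.univ ⊆ Wf).filter
        fun t => Finset.image t Finset.univ = V) := by
    intro V hV
    rw [Finset.mem_powerset] at hV
    unfold cwNV
    congr 1
    rw [Finset.filter_filter]
    apply Finset.filter_congr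
    intro t _
    constructor
    · intro h
      exact ⟨h ▸ hV, h⟩
    · exact fun h => h.2
  rw [Finset.sum_congr rfl h3, ← Finset.card_eq_sum_card_fiberwise
    (fun t ht => Finset.mem_powerset.2 (Finset.mem_filter.1 ht).2), h2]

lemma cw_neg_one_pow_sub (a b : ℕ) (h : b ≤ a) :
    ((-1 : ℚ)) ^ (a - b) = (-1) ^ a * (-1) ^ b := by
  have h1 : ((-1:ℚ))^(a-b) * (-1)^b = (-1)^a := by rw [← pow_add, Nat.sub_add_cancel h]
  have hb : ((-1:ℚ))^b * (-1)^b = 1 := by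
    rw [← pow_add, ← two_mul, pow_mul]
    norm_num
  calc ((-1:ℚ))^(a-b) = (-1:ℚ)^(a-b) * ((-1)^b * (-1)^b) := by rw [hb, mul_one]
    _ = (-1) ^ a * (-1) ^ b := by rw [← mul_assoc, h1]

lemma cw_sum_powerset_neg_one (s : Finset β) :
    ∑ V ∈ s.powerset, ((-1 : ℚ)) ^ V.card = if s = ∅ then 1 else 0 := by
  have h := Finset.sum_powerset_neg_one_pow_card (α := β) (x := s)
  have h2 := congrArg (Int.cast : ℤ → ℚ) h
  push_cast at h2
  simpa [apply_ite (Int.cast : ℤ → ℚ)] using h2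

lemma cw_inner_alt (U T : Finset β) (hTU : T ⊆ U) :
    ∑ V ∈ U.powerset.filter (fun V => T ⊆ V), ((-1:ℚ)) ^ (U.card - V.card)
      = if T = U then 1 else 0 := by
  have hstep : ∑ V ∈ U.powerset.filter (fun V => T ⊆ V), ((-1:ℚ)) ^ (U.card - V.card)
      = ∑ Wt ∈ (U \ T).powerset, ((-1:ℚ)) ^ (U.card - (Wt.card + T.card)) := by
    refine Finset.sum_nbij' (i := fun V => V \ T) (j := fun Wt => Wt ∪ T) ?_ ?_ ?_ ?_ ?_
    · intro V hV
      rw [Finset.mem_filter, Finset.mem_powerset] at hV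
      exact Finset.mem_powerset.2 (Finset.sdiff_subset_sdiff hV.1 Finset.Subset.rfl)
    · intro Wt hWt
      rw [Finset.mem_powerset] at hWt
      rw [Finset.mem_filter, Finset.mem_powerset]
      constructor
      · exact Finset.union_subset (hWt.trans (Finset.sdiff_subset)) hTU
      · exact Finset.subset_union_right
    · intro V hV
      rw [Finset.mem_filter] at hV
      exact Finset.sdiff_union_of_subset hV.2
    · intro Wt hWt
      rw [Finset.mem_powerset] at hWt
      exact Finset.union_sdiff_cancel_right (Finset.disjoint_of_subset_left hWt Finset.sdiff_disjoint)
    · intro V hV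
      rw [Finset.mem_filter, Finset.mem_powerset] at hV
      congr 1
      rw [Finset.card_sdiff_of_subset hV.2, Nat.sub_add_cancel (Finset.card_le_card hV.2)]
  rw [hstep]
  have hcard : ∀ Wt ∈ (U \ T).powerset, ((-1:ℚ)) ^ (U.card - (Wt.card + T.card))
      = ((-1:ℚ)^U.card * (-1)^T.card) * (-1)^Wt.card := by
    intro Wt hWt
    rw [Finset.mem_powerset] at hWt
    have hle : Wt.card + T.card ≤ U.card := by
      have h1 : Wt.card ≤ (U \ T).card := Finset.card_le_card hWt
      have h2 : (U \ T).card = U.card - T.card := Finset.card_sdiff_of_subset hTU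
      have h3 : T.card ≤ U.card := Finset.card_le_card hTU
      omega
    rw [cw_neg_one_pow_sub _ _ hle, pow_add]
    ring
  rw [Finset.sum_congr rfl hcard, ← Finset.mul_sum, cw_sum_powerset_neg_one]
  by_cases h : T = U
  · subst h
    simp [Finset.sdiff_self, ← pow_add, ← two_mul, pow_mul]
  · have hne : U \ T ≠ ∅ := by
      rw [Ne, Finset.sdiff_eq_empty_iff_subset]
      exact fun hUT => h (Finset.Subset.antisymm hTU hUT)
    simp [h, hne]

lemma cw_NV_alt (ℓ : ℕ) (U : Finset β) :
    (cwNV ℓ U : ℚ) = ∑ V ∈ U.powerset, (-1:ℚ) ^ (U.card - V.card) * (V.card : ℚ) ^ ℓ := by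
  have expand : ∀ V ∈ U.powerset, ((V.card : ℚ)) ^ ℓ = ∑ T ∈ V.powerset, (cwNV ℓ T : ℚ) := by
    intro V _
    rw [← Nat.cast_sum, cw_sum_NV ℓ V, Nat.cast_pow]
  symm
  calc ∑ V ∈ U.powerset, (-1:ℚ)^(U.card-V.card) * (V.card:ℚ)^ℓ
      = ∑ V ∈ U.powerset, ∑ T ∈ V.powerset, (-1:ℚ)^(U.card-V.card) * (cwNV ℓ T : ℚ) := by
        refine Finset.sum_congr rfl fun V hV => ?_
        rw [expand V hV, Finset.mul_sum]
    _ = ∑ T ∈ U.powerset, ∑ V ∈ U.powerset.filter (fun V => T ⊆ V),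
          (-1:ℚ)^(U.card-V.card) * (cwNV ℓ T : ℚ) := by
        refine Finset.sum_comm' ?_
        intro V T
        simp only [Finset.mem_powerset, Finset.mem_filter]
        constructor
        · rintro ⟨h1, h2⟩
          exact ⟨⟨h1, h2⟩, h2.trans h1⟩
        · rintro ⟨⟨h1, h2⟩, _⟩
          exact ⟨h1, h2⟩
    _ = ∑ T ∈ U.powerset, (if T = U then (1:ℚ) else 0) * (cwNV ℓ T : ℚ) := by
        refine Finset.sum_congr rfl fun T hT => ?_
        rw [← Finset.sum_mul, cw_inner_alt U T (Finset.mem_powerset.1 hT)]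
    _ = (cwNV ℓ U : ℚ) := by
        rw [Finset.sum_congr rfl (fun T _ => by rw [ite_mul, one_mul, zero_mul]),
          Finset.sum_ite_eq' U.powerset U (fun T => (cwNV ℓ T : ℚ))]
        simp [Finset.mem_powerset_self]

lemma cw_NV_choose (ℓ : ℕ) (U : Finset β) :
    (cwNV ℓ U : ℚ) = ∑ k ∈ Finset.range (U.card + 1),
      (-1:ℚ)^k * (U.card.choose k : ℚ) * ((U.card - k : ℕ) : ℚ) ^ ℓ := by
  rw [cw_NV_alt, Finset.sum_powerset]
  have h1 : ∀ j ∈ Finset.range (U.card+1),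
      ∑ V ∈ Finset.powersetCard j U, (-1:ℚ)^(U.card - V.card) * (V.card:ℚ)^ℓ
        = (U.card.choose j : ℚ) * ((-1:ℚ)^(U.card - j) * (j:ℚ)^ℓ) := by
    intro j _
    rw [Finset.sum_congr rfl (fun V hV => by rw [(Finset.mem_powersetCard.1 hV).2]),
      Finset.sum_const, Finset.card_powersetCard, nsmul_eq_mul]
  rw [Finset.sum_congr rfl h1,
    ← Finset.sum_range_reflect (fun j => (U.card.choose j : ℚ) * ((-1:ℚ)^(U.card - j) * (j:ℚ)^ℓ))]
  refine Finset.sum_congr rfl fun k hk => ?_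
  have hk' : k ≤ U.card := Nat.lt_succ_iff.1 (Finset.mem_range.1 hk)
  simp only [Nat.add_sub_cancel]
  rw [Nat.choose_symm hk', Nat.sub_sub_self hk']
  ring

end Aux

set_option maxHeartbeats 1000000 in
theorem cwc_correlation_moment_bound {S N W K : ℕ} (x : Fin N → Fin S → Bool)
    (hKW : K < W) (hWS : W ≤ S) (hC : IsCWC W K x)
    (ℓ : ℕ) (hl : 1 ≤ ℓ) (A : ℚ)
    (hA : A = ∑ u ∈ Finset.Icc 1 ℓ,
        ((W.choose u : ℚ)) ^ 2 *
          (∑ k ∈ Finset.range (u + 1),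
            (-1 : ℚ) ^ k * (u.choose k : ℚ) * (((u - k : ℕ)) : ℚ) ^ ℓ) / (S.choose u : ℚ))
    (hAK : (K : ℚ) ^ ℓ < A) :
    (N : ℚ) ≤ ((W : ℚ) ^ ℓ - (K : ℚ) ^ ℓ) / (A - (K : ℚ) ^ ℓ) := by
  classical
  obtain ⟨hinj, hwt, hover⟩ := hC
  -- abbreviations
  set f : Fin N → Fin S → ℚ := fun j s => if x j s = true then 1 else 0 with hf
  set mq : Finset (Fin S) → ℚ :=
    fun V => ∑ j : Fin N, if (∀ s ∈ V, x j s = true) then (1:ℚ) else 0 with hmq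
  let Cq : ℕ → ℚ := fun u => ∑ k ∈ Finset.range (u+1),
    (-1:ℚ)^k * (u.choose k : ℚ) * ((u - k : ℕ) : ℚ)^ℓ
  set T : ℚ := ∑ j : Fin N, ∑ j' : Fin N, (cwOverlap (x j) (x j') : ℚ)^ℓ with hT
  have hA' : A = ∑ u ∈ Finset.Icc 1 ℓ,
      (W.choose u : ℚ)^2 * Cq u / (S.choose u : ℚ) := hA
  -- Step A : overlap as inner product
  have ov_eq : ∀ j j' : Fin N, ((cwOverlap (x j) (x j') : ℚ)) = ∑ s : Fin S, f j s * f j' s := by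
    intro j j'
    rw [cwOverlap, Finset.natCast_card_filter]
    refine Finset.sum_congr rfl fun s _ => ?_
    by_cases h1 : x j s = true <;> by_cases h2 : x j' s = true <;> simp [hf, h1, h2]
  -- diagonal overlap
  have diag : ∀ j, cwOverlap (x j) (x j) = W := by
    intro j
    rw [← hwt j]
    unfold cwOverlap cwWeight
    congr 1
    ext s
    simp
  -- Step B : T as a sum over tuples
  have hsum_j : ∀ p : Fin ℓ → Fin S,
      (∑ j : Fin N, ∏ i : Fin ℓ, f j (p i)) = mq (Finset.image p Finset.univ) := by
    intro p
    rw [hmq]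
    refine Finset.sum_congr rfl fun j _ => ?_
    simp only [hf]
    rw [Fintype.prod_boole]
    congr 1
    simp [Finset.forall_mem_image]
  have TB : T = ∑ p : Fin ℓ → Fin S, (mq (Finset.image p Finset.univ))^2 := by
    rw [hT]
    calc ∑ j : Fin N, ∑ j' : Fin N, (cwOverlap (x j) (x j') : ℚ)^ℓ
        = ∑ j : Fin N, ∑ j' : Fin N, ∑ p : Fin ℓ → Fin S, ∏ i, f j (p i) * f j' (p i) := by
          refine Finset.sum_congr rfl fun j _ => Finset.sum_congr rfl fun j' _ => ?_
          rw [ov_eq j j', Fintype.sum_pow]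
      _ = ∑ p : Fin ℓ → Fin S, ∑ j : Fin N, ∑ j' : Fin N, ∏ i, f j (p i) * f j' (p i) := by
          rw [Finset.sum_congr rfl fun j _ => Finset.sum_comm, Finset.sum_comm]
      _ = ∑ p : Fin ℓ → Fin S, (mq (Finset.image p Finset.univ))^2 := by
          refine Finset.sum_congr rfl fun p _ => ?_
          have : ∀ j j' : Fin N, (∏ i, f j (p i) * f j' (p i))
              = (∏ i, f j (p i)) * (∏ i, f j' (p i)) := fun j j' => Finset.prod_mul_distrib
          rw [Finset.sum_congr rfl fun j _ => Finset.sum_congr rfl fun j' _ => this j j',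
            ← Finset.sum_mul_sum, hsum_j p, sq]
  -- Step C : group tuples by image
  have TC : ∑ p : Fin ℓ → Fin S, (mq (Finset.image p Finset.univ))^2
      = ∑ V ∈ (Finset.univ : Finset (Fin S)).powerset, (cwNV ℓ V : ℚ) * (mq V)^2 := by
    rw [← Finset.sum_fiberwise_of_maps_to
        (g := fun p : Fin ℓ → Fin S => Finset.image p Finset.univ)
        (t := (Finset.univ : Finset (Fin S)).powerset)
        (fun p _ => Finset.mem_powerset.2 (Finset.subset_univ _))
        (fun p => (mq (Finset.image p Finset.univ))^2)]
    refine Finset.sum_congr rfl fun V _ => ?_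
    rw [Finset.sum_congr rfl (fun p hp => by rw [(Finset.mem_filter.1 hp).2]),
      Finset.sum_const, nsmul_eq_mul]
    rfl
  have TD : ∑ V ∈ (Finset.univ : Finset (Fin S)).powerset, (cwNV ℓ V : ℚ) * (mq V)^2
      = ∑ u ∈ Finset.range (S+1),
          ∑ V ∈ Finset.powersetCard u (Finset.univ : Finset (Fin S)),
            (cwNV ℓ V : ℚ) * (mq V)^2 := by
    rw [Finset.sum_powerset, Finset.card_univ, Fintype.card_fin]
  -- nonnegativity
  have mq_nonneg : ∀ V, 0 ≤ mq V := by
    intro V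
    rw [hmq]
    refine Finset.sum_nonneg fun j _ => ?_
    split <;> norm_num
  have h_nonneg : ∀ u, (0:ℚ) ≤ ∑ V ∈ Finset.powersetCard u (Finset.univ : Finset (Fin S)),
      (cwNV ℓ V : ℚ) * (mq V)^2 :=
    fun u => Finset.sum_nonneg fun V _ => mul_nonneg (Nat.cast_nonneg _) (sq_nonneg _)
  -- per-u lower bound
  have per_u : ∀ u ∈ Finset.Icc 1 ℓ,
      (N:ℚ)^2 * ((W.choose u : ℚ)^2 * Cq u / (S.choose u : ℚ))
        ≤ ∑ V ∈ Finset.powersetCard u (Finset.univ : Finset (Fin S)),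
            (cwNV ℓ V : ℚ) * (mq V)^2 := by
    intro u _
    by_cases huS : u ≤ S
    · have hSc : (0:ℚ) < (S.choose u : ℚ) := by
        exact_mod_cast Nat.choose_pos huS
      have hNV : ∀ V ∈ Finset.powersetCard u (Finset.univ : Finset (Fin S)),
          (cwNV ℓ V : ℚ) = Cq u := by
        intro V hV
        rw [cw_NV_choose, (Finset.mem_powersetCard.1 hV).2]
      have hCqnn : 0 ≤ Cq u := by
        obtain ⟨U0, hU0sub, hU0card⟩ := Finset.exists_subset_card_eq
          (show u ≤ #(Finset.univ : Finset (Fin S)) by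
            simpa [Finset.card_univ] using huS)
        rw [← hNV U0 (Finset.mem_powersetCard.2 ⟨hU0sub, hU0card⟩)]
        positivity
      have hsum_mq : ∑ V ∈ Finset.powersetCard u (Finset.univ : Finset (Fin S)), mq V
          = (N:ℚ) * (W.choose u : ℚ) := by
        rw [hmq]
        rw [Finset.sum_comm]
        have hj : ∀ j : Fin N, ∑ V ∈ Finset.powersetCard u (Finset.univ : Finset (Fin S)),
            (if (∀ s ∈ V, x j s = true) then (1:ℚ) else 0) = (W.choose u : ℚ) := by
          intro j
          rw [Finset.sum_boole]
          have heq : Finset.filter (fun V => ∀ s ∈ V, x j s = true)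
              (Finset.powersetCard u (Finset.univ : Finset (Fin S)))
              = Finset.powersetCard u (Finset.univ.filter fun s => x j s = true) := by
            ext V
            simp only [Finset.mem_filter, Finset.mem_powersetCard]
            constructor
            · rintro ⟨⟨_, hcard⟩, hall⟩
              exact ⟨fun s hs => Finset.mem_filter.2 ⟨Finset.mem_univ s, hall s hs⟩, hcard⟩
            · rintro ⟨hsub, hcard⟩
              exact ⟨⟨Finset.subset_univ V, hcard⟩,
                fun s hs => (Finset.mem_filter.1 (hsub hs)).2⟩
          rw [heq, Finset.card_powersetCard]
          have : #(Finset.univ.filter fun s => x j s = true) = W := hwt j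
          rw [this]
        rw [Finset.sum_congr rfl fun j _ => hj j, Finset.sum_const, Finset.card_univ,
          Fintype.card_fin, nsmul_eq_mul]
      have cauchy := sq_sum_le_card_mul_sum_sq
        (s := Finset.powersetCard u (Finset.univ : Finset (Fin S))) (f := mq)
      rw [hsum_mq, Finset.card_powersetCard, Finset.card_univ, Fintype.card_fin] at cauchy
      have hrw : ∑ V ∈ Finset.powersetCard u (Finset.univ : Finset (Fin S)),
            (cwNV ℓ V : ℚ) * (mq V)^2
          = Cq u * ∑ V ∈ Finset.powersetCard u (Finset.univ : Finset (Fin S)), (mq V)^2 := by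
        rw [Finset.mul_sum]
        exact Finset.sum_congr rfl fun V hV => by rw [hNV V hV]
      rw [hrw]
      have key := mul_le_mul_of_nonneg_left cauchy hCqnn
      rw [show (N:ℚ)^2 * ((W.choose u : ℚ)^2 * Cq u / (S.choose u : ℚ))
          = Cq u * ((N:ℚ) * (W.choose u : ℚ))^2 / (S.choose u : ℚ) by ring,
        div_le_iff₀ hSc]
      nlinarith [key]
    · have hW : W.choose u = 0 := Nat.choose_eq_zero_of_lt (lt_of_le_of_lt hWS (not_le.1 huS))
      rw [hW]
      push_cast
      rw [show (0:ℚ)^2 * Cq u / (S.choose u : ℚ) = 0 by ring, mul_zero]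
      exact h_nonneg u
  -- global lower bound
  have lower : (N:ℚ)^2 * A ≤ T := by
    rw [hA', Finset.mul_sum]
    have step1 : ∑ u ∈ Finset.Icc 1 ℓ,
        (N:ℚ)^2 * ((W.choose u : ℚ)^2 * Cq u / (S.choose u : ℚ))
        ≤ ∑ u ∈ Finset.Icc 1 ℓ,
          ∑ V ∈ Finset.powersetCard u (Finset.univ : Finset (Fin S)),
            (cwNV ℓ V : ℚ) * (mq V)^2 := Finset.sum_le_sum per_u
    have step2 : ∑ u ∈ Finset.Icc 1 ℓ,
        ∑ V ∈ Finset.powersetCard u (Finset.univ : Finset (Fin S)),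
          (cwNV ℓ V : ℚ) * (mq V)^2
        = ∑ u ∈ (Finset.Icc 1 ℓ).filter (· ≤ S),
          ∑ V ∈ Finset.powersetCard u (Finset.univ : Finset (Fin S)),
            (cwNV ℓ V : ℚ) * (mq V)^2 := by
      refine (Finset.sum_subset (Finset.filter_subset _ _) ?_).symm
      intro u huIcc hu
      simp only [Finset.mem_filter, not_and, not_le] at hu
      have hemp : Finset.powersetCard u (Finset.univ : Finset (Fin S)) = ∅ :=
        Finset.powersetCard_eq_empty.2 (by
          rw [Finset.card_univ, Fintype.card_fin]; exact hu huIcc)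
      rw [hemp, Finset.sum_empty]
    have step3 : ∑ u ∈ (Finset.Icc 1 ℓ).filter (· ≤ S),
        ∑ V ∈ Finset.powersetCard u (Finset.univ : Finset (Fin S)),
          (cwNV ℓ V : ℚ) * (mq V)^2
        ≤ ∑ u ∈ Finset.range (S+1),
          ∑ V ∈ Finset.powersetCard u (Finset.univ : Finset (Fin S)),
            (cwNV ℓ V : ℚ) * (mq V)^2 := by
      refine Finset.sum_le_sum_of_subset_of_nonneg ?_ fun u _ _ => h_nonneg u
      intro u hu
      rw [Finset.mem_filter] at hu
      exact Finset.mem_range.2 (Nat.lt_succ_of_le hu.2)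
    calc ∑ u ∈ Finset.Icc 1 ℓ,
          (N:ℚ)^2 * ((W.choose u : ℚ)^2 * Cq u / (S.choose u : ℚ))
        ≤ ∑ u ∈ Finset.Icc 1 ℓ,
          ∑ V ∈ Finset.powersetCard u (Finset.univ : Finset (Fin S)),
            (cwNV ℓ V : ℚ) * (mq V)^2 := step1
      _ = ∑ u ∈ (Finset.Icc 1 ℓ).filter (· ≤ S),
          ∑ V ∈ Finset.powersetCard u (Finset.univ : Finset (Fin S)),
            (cwNV ℓ V : ℚ) * (mq V)^2 := step2
      _ ≤ ∑ u ∈ Finset.range (S+1),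
          ∑ V ∈ Finset.powersetCard u (Finset.univ : Finset (Fin S)),
            (cwNV ℓ V : ℚ) * (mq V)^2 := step3
      _ = T := by rw [TB, TC, TD]
  -- upper bound
  have upper : T ≤ (N:ℚ) * ((W:ℚ)^ℓ + ((N-1:ℕ):ℚ) * (K:ℚ)^ℓ) := by
    rw [hT]
    have per_j : ∀ j : Fin N, ∑ j' : Fin N, (cwOverlap (x j) (x j') : ℚ)^ℓ
        ≤ (W:ℚ)^ℓ + ((N-1:ℕ):ℚ) * (K:ℚ)^ℓ := by
      intro j
      rw [← Finset.add_sum_erase Finset.univ _ (Finset.mem_univ j)]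
      refine add_le_add (le_of_eq (by rw [diag j])) ?_
      have hb : ∀ j' ∈ Finset.univ.erase j, (cwOverlap (x j) (x j') : ℚ)^ℓ ≤ (K:ℚ)^ℓ := by
        intro j' hj'
        have hne : j ≠ j' := (Finset.ne_of_mem_erase hj').symm
        exact pow_le_pow_left₀ (Nat.cast_nonneg _) (by exact_mod_cast hover j j' hne) ℓ
      calc ∑ j' ∈ Finset.univ.erase j, (cwOverlap (x j) (x j') : ℚ)^ℓ
          ≤ #(Finset.univ.erase j) • (K:ℚ)^ℓ := Finset.sum_le_card_nsmul _ _ _ hb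
        _ = ((N-1:ℕ):ℚ) * (K:ℚ)^ℓ := by
            rw [Finset.card_erase_of_mem (Finset.mem_univ j), Finset.card_univ,
              Fintype.card_fin, nsmul_eq_mul]
    calc ∑ j : Fin N, ∑ j' : Fin N, (cwOverlap (x j) (x j') : ℚ)^ℓ
        ≤ ∑ _j : Fin N, ((W:ℚ)^ℓ + ((N-1:ℕ):ℚ) * (K:ℚ)^ℓ) :=
          Finset.sum_le_sum fun j _ => per_j j
      _ = (N:ℚ) * ((W:ℚ)^ℓ + ((N-1:ℕ):ℚ) * (K:ℚ)^ℓ) := by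
          rw [Finset.sum_const, Finset.card_univ, Fintype.card_fin, nsmul_eq_mul]
  -- endgame
  have hApos : (0:ℚ) < A - (K:ℚ)^ℓ := sub_pos.2 hAK
  rcases Nat.eq_zero_or_pos N with hN | hN
  · rw [hN]
    push_cast
    refine div_nonneg ?_ hApos.le
    have hKWq : (K:ℚ) ≤ (W:ℚ) := by exact_mod_cast hKW.le
    have := pow_le_pow_left₀ (by positivity : (0:ℚ) ≤ (K:ℚ)) hKWq ℓ
    linarith
  · have hN1 : (1:ℚ) ≤ (N:ℚ) := by exact_mod_cast hN
    have hNpos : (0:ℚ) < (N:ℚ) := by linarith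
    have hcast : ((N-1:ℕ):ℚ) = (N:ℚ) - 1 := by
      rw [Nat.cast_sub hN, Nat.cast_one]
    have h2 : (N:ℚ)^2 * A ≤ (N:ℚ) * ((W:ℚ)^ℓ + ((N:ℚ)-1) * (K:ℚ)^ℓ) := by
      rw [← hcast]
      exact lower.trans upper
    rw [le_div_iff₀ hApos]
    nlinarith [h2, hN1, hNpos]
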